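/- For any connected graph G on N vertices (N = kn), the number of spanning forests of G with exactly k components each of size n is at most the number of k-splittable spanning trees of G, and the number of k-splittable spanning trees of G is at most N^{2(k-1)} times the number of such balanced spanning forests. -/

import Mathlib

open SimpleGraph

section AuxiliaryLemmas
variable {V : Type*}

private lemma aux_acyclic_mono {G H : SimpleGraph V} (hle : H ≤ G) (h : G.IsAcyclic) :
    H.IsAcyclic := fun _ c hc => h (c.mapLe hle) (hc.mapLe hle)

private lemma aux_reach_sup_edge {H : SimpleGraph V} {a b x y : V}
    (h : (H ⊔ fromEdgeSet {s(a, b)}).Reachable x y) :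
    H.Reachable x y ∨ (H.Reachable x a ∧ H.Reachable b y) ∨
      (H.Reachable x b ∧ H.Reachable a y) := by
  obtain ⟨w⟩ := h
  induction w with
  | nil => exact Or.inl (Reachable.refl _)
  | @cons x x' y hadj p ih =>
    rcases (sup_adj _ _ _ _).mp hadj with hH | hE
    · rcases ih with h1 | ⟨h1, h2⟩ | ⟨h1, h2⟩
      · exact Or.inl (hH.reachable.trans h1)
      · exact Or.inr (Or.inl ⟨hH.reachable.trans h1, h2⟩)
      · exact Or.inr (Or.inr ⟨hH.reachable.trans h1, h2⟩)
    · rw [fromEdgeSet_adj, Set.mem_singleton_iff, Sym2.eq_iff] at hE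
      rcases hE.1 with ⟨rfl, rfl⟩ | ⟨rfl, rfl⟩
      · rcases ih with h1 | ⟨h1, h2⟩ | ⟨h1, h2⟩
        · exact Or.inr (Or.inl ⟨Reachable.refl _, h1⟩)
        · exact Or.inr (Or.inl ⟨Reachable.refl _, h2⟩)
        · exact Or.inl h2
      · rcases ih with h1 | ⟨h1, h2⟩ | ⟨h1, h2⟩
        · exact Or.inr (Or.inr ⟨Reachable.refl _, h1⟩)
        · exact Or.inl h2
        · exact Or.inr (Or.inr ⟨Reachable.refl _, h2⟩)

private lemma aux_cross {G H : SimpleGraph V} {x y : V} (w : G.Walk x y)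
    (hxy : ¬ H.Reachable x y) : ∃ a b, G.Adj a b ∧ ¬ H.Reachable a b := by
  induction w with
  | nil => exact absurd (Reachable.refl _) hxy
  | @cons u v z hadj p ih =>
    by_cases hr : H.Reachable u v
    · exact ih fun r => hxy (hr.trans r)
    · exact ⟨u, v, hadj, hr⟩


private lemma aux_acyclic_sup_edge {H : SimpleGraph V} (hH : H.IsAcyclic) {a b : V}
    (hab : ¬H.Reachable a b) : (H ⊔ fromEdgeSet {s(a, b)}).IsAcyclic := by
  rw [isAcyclic_iff_forall_adj_isBridge]
  intro x y hadj
  rw [isBridge_iff]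
  refine fun hreach => ?_
  rcases (sup_adj _ _ _ _).mp hadj with hxy | hE
  · have hle : (H ⊔ fromEdgeSet {s(a, b)}) \ fromEdgeSet {s(x, y)} ≤
        (H \ fromEdgeSet {s(x, y)}) ⊔ fromEdgeSet {s(a, b)} := by
      intro u v huv
      obtain ⟨h1, h2⟩ := (sdiff_adj _ _ _ _).mp huv
      rcases (sup_adj _ _ _ _).mp h1 with h | h
      · exact (sup_adj _ _ _ _).mpr (Or.inl ((sdiff_adj _ _ _ _).mpr ⟨h, h2⟩))
      · exact (sup_adj _ _ _ _).mpr (Or.inr h)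
    have hbr := (isAcyclic_iff_forall_adj_isBridge.mp hH) hxy
    rcases aux_reach_sup_edge (hreach.mono hle) with h1 | ⟨h1, h2⟩ | ⟨h1, h2⟩
    · exact isBridge_iff.mp hbr h1
    · exact hab (((h1.symm.mono sdiff_le).trans hxy.reachable).trans (h2.symm.mono sdiff_le))
    · exact hab (((h2.mono sdiff_le).trans hxy.reachable.symm).trans (h1.mono sdiff_le))
  · rw [fromEdgeSet_adj, Set.mem_singleton_iff] at hE
    have hle2 : (H ⊔ fromEdgeSet {s(a, b)}) \ fromEdgeSet {s(x, y)} ≤ H := by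
      intro u v huv
      obtain ⟨h1, h2⟩ := (sdiff_adj _ _ _ _).mp huv
      rcases (sup_adj _ _ _ _).mp h1 with h | h
      · exact h
      · rw [hE.1] at h2; exact absurd h h2
    have hR : H.Reachable x y := hreach.mono hle2
    rcases Sym2.eq_iff.mp hE.1 with ⟨rfl, rfl⟩ | ⟨rfl, rfl⟩
    · exact hab hR
    · exact hab hR.symm

private lemma aux_card_cc_sup_edge [Finite V] {H : SimpleGraph V} {a b : V}
    (hab : ¬H.Reachable a b) :
    Nat.card (H ⊔ fromEdgeSet {s(a, b)}).ConnectedComponent + 1 =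
      Nat.card H.ConnectedComponent := by
  classical
  have hne : a ≠ b := fun h => hab (h ▸ Reachable.refl a)
  set H' := H ⊔ fromEdgeSet {s(a, b)} with hH'
  have hadj' : H'.Adj a b := (sup_adj _ _ _ _).mpr (Or.inr ((fromEdgeSet_adj _).mpr ⟨rfl, hne⟩))
  set b0 := H.connectedComponentMk b with hb0
  have hrep : ∀ (W : SimpleGraph V) (c : W.ConnectedComponent),
      ∃ v, W.connectedComponentMk v = c := fun W c => c.exists_rep
  let φ : H →g H' := Hom.ofLE le_sup_left
  let f : {c : H.ConnectedComponent // ¬ c = b0} → H'.ConnectedComponent :=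
    fun c => c.1.map φ
  have hkey : ∀ x y : V, H'.Reachable x y → ¬H.Reachable x b → ¬H.Reachable y b →
      H.Reachable x y := by
    intro x y h hxb hyb
    rcases aux_reach_sup_edge h with h1 | ⟨h1, h2⟩ | ⟨h1, h2⟩
    · exact h1
    · exact absurd h2.symm hyb
    · exact absurd h1 hxb
  have hfb : Function.Bijective f := by
    constructor
    · intro c d hf
      apply Subtype.ext
      obtain ⟨x, hx⟩ := hrep H c.1
      obtain ⟨y, hy⟩ := hrep H d.1
      have hxb : ¬ H.Reachable x b := fun h =>
        c.2 (by rw [← hx]; exact ConnectedComponent.sound h)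
      have hyb : ¬ H.Reachable y b := fun h =>
        d.2 (by rw [← hy]; exact ConnectedComponent.sound h)
      have hf' : c.1.map φ = d.1.map φ := hf
      rw [← hx, ← hy, ConnectedComponent.map_mk, ConnectedComponent.map_mk] at hf'
      simp only [φ, Hom.ofLE_apply] at hf'
      have hr : H'.Reachable x y := ConnectedComponent.eq.mp hf'
      rw [← hx, ← hy]
      exact ConnectedComponent.sound (hkey x y hr hxb hyb)
    · intro d
      obtain ⟨x, hx⟩ := hrep H' d
      by_cases hxb : H.Reachable x b
      · refine ⟨⟨H.connectedComponentMk a, fun h => hab (ConnectedComponent.eq.mp h)⟩, ?_⟩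
        show (H.connectedComponentMk a).map φ = d
        rw [ConnectedComponent.map_mk, ← hx]
        simp only [φ, Hom.ofLE_apply]
        exact ConnectedComponent.sound (hadj'.reachable.trans (hxb.symm.mono le_sup_left))
      · refine ⟨⟨H.connectedComponentMk x, fun h => hxb (ConnectedComponent.eq.mp h)⟩, ?_⟩
        show (H.connectedComponentMk x).map φ = d
        rw [ConnectedComponent.map_mk, ← hx]
        simp only [φ, Hom.ofLE_apply]
  have hcard1 : Nat.card H'.ConnectedComponent =
      Nat.card {c : H.ConnectedComponent // ¬ c = b0} :=
    (Nat.card_eq_of_bijective f hfb).symm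
  have hsum := Nat.card_congr (Equiv.sumCompl (fun c : H.ConnectedComponent => c = b0))
  rw [Nat.card_sum] at hsum
  have h1 : Nat.card {c : H.ConnectedComponent // c = b0} = 1 :=
    Nat.card_eq_one_iff_unique.mpr
      ⟨⟨fun c d => by rcases c with ⟨c, rfl⟩; rcases d with ⟨d, hd⟩; simp [hd]⟩, ⟨⟨b0, rfl⟩⟩⟩
  rw [hcard1, ← hsum, h1]
  omega


private lemma aux_dvd_ncard [Fintype V] {H : SimpleGraph V} {n : ℕ}
    (hcomp : ∀ c : H.ConnectedComponent, c.supp.ncard = n) {A : Set V}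
    (hA : ∀ x ∈ A, (H.connectedComponentMk x).supp ⊆ A) : n ∣ A.ncard := by
  classical
  have hsum := Finset.card_eq_sum_card_image
    (fun x => H.connectedComponentMk x) A.toFinset
  have hfib : ∀ c ∈ A.toFinset.image (fun x => H.connectedComponentMk x),
      (A.toFinset.filter (fun x => H.connectedComponentMk x = c)).card = n := by
    intro c hc
    obtain ⟨x, hxA, rfl⟩ := Finset.mem_image.mp hc
    have hxA' : x ∈ A := Set.mem_toFinset.mp hxA
    have hsub := hA x hxA'
    have hset : (A.toFinset.filter
        (fun z => H.connectedComponentMk z = H.connectedComponentMk x)) =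
        (H.connectedComponentMk x).supp.toFinset := by
      ext z
      simp only [Finset.mem_filter, Set.mem_toFinset, ConnectedComponent.mem_supp_iff]
      exact ⟨fun h => h.2, fun h => ⟨hsub (by rw [ConnectedComponent.mem_supp_iff]; exact h), h⟩⟩
    rw [hset, ← Set.ncard_eq_toFinset_card']
    exact hcomp _
  rw [Set.ncard_eq_toFinset_card', hsum, Finset.sum_congr rfl hfib, Finset.sum_const,
    smul_eq_mul]
  exact dvd_mul_left n _

private lemma aux_card_comp_mul [Fintype V] (H : SimpleGraph V) {n : ℕ}
    (h : ∀ c : H.ConnectedComponent, c.supp.ncard = n) :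
    Fintype.card V = Nat.card H.ConnectedComponent * n := by
  classical
  have e := Equiv.sigmaFiberEquiv (fun v : V => H.connectedComponentMk v)
  have hc : Fintype.card V =
      ∑ c : H.ConnectedComponent, Fintype.card {v : V // H.connectedComponentMk v = c} := by
    rw [← Fintype.card_sigma]
    exact (Fintype.card_congr e).symm
  have hfib : ∀ c : H.ConnectedComponent,
      Fintype.card {v : V // H.connectedComponentMk v = c} = n := by
    intro c
    rw [← h c, ← Nat.card_coe_set_eq, Nat.card_eq_fintype_card]
    exact Fintype.card_congr (Equiv.subtypeEquivRight fun v => Iff.rfl)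
  rw [hc, Finset.sum_congr rfl (fun c _ => hfib c), Finset.sum_const, smul_eq_mul,
    Finset.card_univ, Nat.card_eq_fintype_card]

private lemma aux_mem_iff_dvd [Fintype V] {T : SimpleGraph V} (hT : T.IsAcyclic)
    {F : Set (Sym2 V)} {n : ℕ} (hn : 0 < n)
    (hcomp : ∀ c : (T.deleteEdges F).ConnectedComponent, c.supp.ncard = n)
    {u v : V} (huv : T.Adj u v) :
    s(u, v) ∈ F ↔
      n ∣ (((T.deleteEdges {s(u, v)}).connectedComponentMk u).supp).ncard := by
  classical
  constructor
  · intro heF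
    apply aux_dvd_ncard hcomp
    intro x hx z hz
    rw [ConnectedComponent.mem_supp_iff, ConnectedComponent.eq] at hz
    rw [ConnectedComponent.mem_supp_iff, ConnectedComponent.eq] at hx ⊢
    have hle : T.deleteEdges F ≤ T.deleteEdges {s(u, v)} := by
      intro p q hpq
      obtain ⟨h1, h2⟩ := deleteEdges_adj.mp hpq
      refine deleteEdges_adj.mpr ⟨h1, ?_⟩
      rw [Set.mem_singleton_iff]
      intro hpq'
      rw [hpq'] at h2
      exact h2 heF
    exact (hz.mono hle).trans hx
  · intro hdvd
    by_contra heF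
    have hCadj : (T.deleteEdges F).Adj u v := deleteEdges_adj.mpr ⟨huv, heF⟩
    set A := ((T.deleteEdges {s(u, v)}).connectedComponentMk u).supp with hA
    set C := (T.deleteEdges F).connectedComponentMk u with hC
    have huA : u ∈ A := rfl
    have huC : u ∈ C.supp := rfl
    have hvC : v ∈ C.supp := ConnectedComponent.sound hCadj.symm.reachable
    have hvA : v ∉ A := by
      have hbr := (isAcyclic_iff_forall_adj_isBridge.mp hT) huv
      intro h
      rw [ConnectedComponent.mem_supp_iff, ConnectedComponent.eq] at h
      exact isBridge_iff.mp hbr h.symm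
    have hclose : ∀ x ∈ A \ C.supp,
        ((T.deleteEdges F).connectedComponentMk x).supp ⊆ A \ C.supp := by
      rintro x ⟨hxA, hxC⟩ z hz
      have hxC' : (T.deleteEdges F).connectedComponentMk x ≠ C := fun h => hxC h
      rw [ConnectedComponent.mem_supp_iff, ConnectedComponent.eq] at hz
      constructor
      · rw [ConnectedComponent.mem_supp_iff, ConnectedComponent.eq] at hxA ⊢
        obtain ⟨w⟩ := hz
        by_cases hew : s(u, v) ∈ w.edges
        · exfalso
          have hu_supp : u ∈ w.support := Walk.fst_mem_support_of_mem_edges w hew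
          have hux : (T.deleteEdges F).Reachable u x := ⟨w.dropUntil u hu_supp⟩
          exact hxC' (ConnectedComponent.sound hux.symm)
        · have hw' := w.toDeleteEdges {s(u, v)}
            (fun e' he' => by rw [Set.mem_singleton_iff]; rintro rfl; exact hew he')
          have hle2 : (T.deleteEdges F).deleteEdges {s(u, v)} ≤ T.deleteEdges {s(u, v)} := by
            intro p q hpq
            obtain ⟨h1, h2⟩ := deleteEdges_adj.mp hpq
            exact deleteEdges_adj.mpr ⟨(deleteEdges_adj.mp h1).1, h2⟩
          exact (Reachable.mono hle2 ⟨hw'⟩).trans hxA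
      · intro hzC
        rw [ConnectedComponent.mem_supp_iff] at hzC
        exact hxC' ((ConnectedComponent.sound hz).symm.trans hzC)
    have hdvd' : n ∣ (A \ C.supp).ncard := aux_dvd_ncard hcomp hclose
    have hsplit : A.ncard = (A \ C.supp).ncard + (A ∩ C.supp).ncard := by
      rw [← Set.ncard_union_eq (Set.disjoint_of_subset_right Set.inter_subset_right
        Set.disjoint_sdiff_left) (Set.toFinite _) (Set.toFinite _), Set.diff_union_inter]
    have hrpos : 0 < (A ∩ C.supp).ncard := by
      rw [Set.ncard_pos (Set.toFinite _)]
      exact ⟨u, huA, huC⟩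
    have hrlt : (A ∩ C.supp).ncard < n := by
      have hss : A ∩ C.supp ⊂ C.supp :=
        ⟨Set.inter_subset_right, fun hsub => hvA (hsub hvC).1⟩
      have := Set.ncard_lt_ncard hss (Set.toFinite _)
      rwa [hcomp C] at this
    rw [hsplit] at hdvd
    have : n ∣ (A ∩ C.supp).ncard := (Nat.dvd_add_right hdvd').mp hdvd
    exact absurd (Nat.le_of_dvd hrpos this) (not_le.mpr hrlt)

private lemma aux_unique [Fintype V] {T : SimpleGraph V} (hT : T.IsAcyclic) {n : ℕ}
    (hn : 0 < n) {F₁ F₂ : Set (Sym2 V)} (h1 : F₁ ⊆ T.edgeSet) (h2 : F₂ ⊆ T.edgeSet)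
    (hc1 : ∀ c : (T.deleteEdges F₁).ConnectedComponent, c.supp.ncard = n)
    (hc2 : ∀ c : (T.deleteEdges F₂).ConnectedComponent, c.supp.ncard = n) : F₁ = F₂ := by
  ext e
  induction e using Sym2.ind with
  | _ u v =>
    constructor
    · intro h
      have huv : T.Adj u v := (mem_edgeSet _).mp (h1 h)
      exact (aux_mem_iff_dvd hT hn hc2 huv).mpr ((aux_mem_iff_dvd hT hn hc1 huv).mp h)
    · intro h
      have huv : T.Adj u v := (mem_edgeSet _).mp (h2 h)
      exact (aux_mem_iff_dvd hT hn hc1 huv).mpr ((aux_mem_iff_dvd hT hn hc2 huv).mp h)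

private lemma aux_exists_tree [Fintype V] [Nonempty V] {G : SimpleGraph V}
    (hG : G.Connected) (j : ℕ) :
    ∀ H : SimpleGraph V, H ≤ G → H.IsAcyclic → Nat.card H.ConnectedComponent = j →
    ∃ (T : SimpleGraph V) (F : Finset (Sym2 V)), H ≤ T ∧ T ≤ G ∧ T.IsTree ∧
      Disjoint (↑F : Set (Sym2 V)) H.edgeSet ∧ T.edgeSet = H.edgeSet ∪ ↑F ∧
      F.card = j - 1 := by
  induction j using Nat.strong_induction_on with
  | _ j ih =>
    intro H hle hac hcard
    classical
    haveI : Nonempty H.ConnectedComponent := ⟨H.connectedComponentMk (Classical.arbitrary V)⟩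
    by_cases hpre : ∀ x y : V, H.Reachable x y
    · have hj : j = 1 := by
        rw [← hcard]
        refine Nat.card_eq_one_iff_unique.mpr ⟨⟨fun c d => ?_⟩, inferInstance⟩
        obtain ⟨x, hx⟩ := c.exists_rep
        obtain ⟨y, hy⟩ := d.exists_rep
        rw [← hx, ← hy]
        exact ConnectedComponent.sound (hpre x y)
      exact ⟨H, ∅, le_refl _, hle, ⟨Connected.mk hpre, hac⟩, by simp, by simp, by simp [hj]⟩
    · push_neg at hpre
      obtain ⟨x0, y0, hxy⟩ := hpre
      obtain ⟨w⟩ := hG.preconnected x0 y0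
      obtain ⟨a, b, hGadj, hnr⟩ := aux_cross w hxy
      have hne : a ≠ b := fun h => hnr (h ▸ Reachable.refl a)
      have hnadj : ¬ H.Adj a b := fun h => hnr h.reachable
      set H' := H ⊔ fromEdgeSet {s(a, b)} with hH'
      have hH'G : H' ≤ G := by
        refine sup_le hle ?_
        intro p q hpq
        rw [fromEdgeSet_adj, Set.mem_singleton_iff] at hpq
        rcases Sym2.eq_iff.mp hpq.1 with ⟨rfl, rfl⟩ | ⟨rfl, rfl⟩
        · exact hGadj
        · exact hGadj.symm
      have hH'ac : H'.IsAcyclic := aux_acyclic_sup_edge hac hnr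
      have hcard' := aux_card_cc_sup_edge (H := H) hnr
      rw [hcard, ← hH'] at hcard'
      haveI : Nonempty H'.ConnectedComponent :=
        ⟨H'.connectedComponentMk (Classical.arbitrary V)⟩
      have hj2 : 2 ≤ j := by
        have : 0 < Nat.card H'.ConnectedComponent := Nat.card_pos
        omega
      obtain ⟨T, F', hH'T, hTG, hTree, hdisj', hedges', hcF'⟩ :=
        ih (j - 1) (by omega) H' hH'G hH'ac (by omega)
      have habT : s(a, b) ∈ H'.edgeSet := by
        rw [mem_edgeSet]
        exact (sup_adj _ _ _ _).mpr (Or.inr ((fromEdgeSet_adj _).mpr ⟨rfl, hne⟩))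
      have habF' : s(a, b) ∉ F' := fun h =>
        Set.disjoint_left.mp hdisj' (by exact_mod_cast h) habT
      have hH'edges : H'.edgeSet = H.edgeSet ∪ {s(a, b)} := by
        rw [hH', edgeSet_sup, edgeSet_fromEdgeSet]
        congr 1
        ext e
        simp only [Set.mem_diff, Set.mem_singleton_iff, Set.mem_setOf_eq]
        exact ⟨fun h => h.1, fun h => ⟨h, by rw [h]; simp [hne]⟩⟩
      refine ⟨T, insert s(a, b) F', le_trans le_sup_left hH'T, hTG, hTree, ?_, ?_, ?_⟩
      · rw [Finset.coe_insert]
        refine Set.disjoint_left.mpr ?_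
        intro e he heH
        rcases Set.mem_insert_iff.mp he with rfl | heF'
        · exact hnadj ((mem_edgeSet _).mp heH)
        · exact Set.disjoint_left.mp hdisj' (by exact_mod_cast heF')
            (by rw [hH'edges]; exact Or.inl heH)
      · rw [hedges', hH'edges, Finset.coe_insert]
        rw [Set.insert_eq]
        rw [Set.union_assoc]
      · rw [Finset.card_insert_of_notMem habF', hcF']
        omega

end AuxiliaryLemmas

/-- A spanning tree `T` (of a graph on `k*n` vertices) is `k`-splittable into pieces of
size `n` if some `k-1` of its edges can be removed so that every connected component of
the result has exactly `n` vertices. -/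
def IsSplittable {V : Type*} [Fintype V] (T : SimpleGraph V) (k n : ℕ) : Prop :=
  ∃ F : Finset (Sym2 V), ↑F ⊆ T.edgeSet ∧ F.card = k - 1 ∧
    ∀ c : (T.deleteEdges ↑F).ConnectedComponent, c.supp.ncard = n

/-- The number of `k`-splittable spanning trees of `G`. -/
noncomputable def numSplittableSpanningTrees {V : Type*} [Fintype V]
    (G : SimpleGraph V) (k n : ℕ) : ℕ :=
  Set.ncard {T : SimpleGraph V | T ≤ G ∧ T.IsTree ∧ IsSplittable T k n}

/-- The number of balanced spanning forests of `G`: spanning forests with exactly `k`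
connected components, each of size `n`. -/
noncomputable def numBalancedSpanningForests {V : Type*} [Fintype V]
    (G : SimpleGraph V) (k n : ℕ) : ℕ :=
  Set.ncard {H : SimpleGraph V | H ≤ G ∧ H.IsAcyclic ∧
    Nat.card H.ConnectedComponent = k ∧ ∀ c : H.ConnectedComponent, c.supp.ncard = n}

/-- For a connected graph `G` on `N = k*n` vertices, the number of balanced
spanning forests of `G` is at most the number of `k`-splittable spanning trees of `G`,
which in turn is at most `N^(2(k-1))` times the number of balanced spanning forests. -/
theorem balanced_forests_vs_splittable_trees {V : Type*} [Fintype V] (G : SimpleGraph V)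
    (hG : G.Connected) (k n : ℕ) (hk : 0 < k) (hn : 0 < n)
    (hV : Fintype.card V = k * n) :
    numBalancedSpanningForests G k n ≤ numSplittableSpanningTrees G k n ∧
    numSplittableSpanningTrees G k n ≤
      Fintype.card V ^ (2 * (k - 1)) * numBalancedSpanningForests G k n := by
  classical
  haveI hNV : Nonempty V := Fintype.card_pos_iff.mp (by rw [hV]; positivity)
  set S := {T : SimpleGraph V | T ≤ G ∧ T.IsTree ∧ IsSplittable T k n} with hSdef
  set B := {H : SimpleGraph V | H ≤ G ∧ H.IsAcyclic ∧
    Nat.card H.ConnectedComponent = k ∧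
    ∀ c : H.ConnectedComponent, c.supp.ncard = n} with hBdef
  have hnumS : numSplittableSpanningTrees G k n = S.ncard := rfl
  have hnumB : numBalancedSpanningForests G k n = B.ncard := rfl
  set Φ : SimpleGraph V → SimpleGraph V :=
    fun T => if h : IsSplittable T k n then T.deleteEdges ↑h.choose else ⊥ with hΦdef
  -- basic facts about Φ on S
  have hmain : ∀ T ∈ S, ∃ F : Finset (Sym2 V), Φ T = T.deleteEdges ↑F ∧
      (↑F : Set (Sym2 V)) ⊆ T.edgeSet ∧ F.card = k - 1 ∧
      (∀ c : (T.deleteEdges (↑F : Set (Sym2 V))).ConnectedComponent, c.supp.ncard = n) ∧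
      (↑F : Set (Sym2 V)) = T.edgeSet \ (Φ T).edgeSet := by
    intro T hT
    obtain ⟨hTG, hTree, hsp⟩ := hT
    have hPhi : Φ T = T.deleteEdges ↑hsp.choose := by
      rw [hΦdef]
      exact dif_pos hsp
    obtain ⟨hsub, hcardF, hcomps⟩ := hsp.choose_spec
    refine ⟨hsp.choose, hPhi, hsub, hcardF, hcomps, ?_⟩
    rw [hPhi, edgeSet_deleteEdges]
    exact (Set.diff_diff_cancel_left hsub).symm
  have hPhiB : ∀ T ∈ S, Φ T ∈ B := by
    intro T hT
    obtain ⟨F, hPhi, hsub, hcardF, hcomps, _⟩ := hmain T hT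
    obtain ⟨hTG, hTree, _⟩ := hT
    have hle : Φ T ≤ G := by rw [hPhi]; exact le_trans (deleteEdges_le _) hTG
    have hac : (Φ T).IsAcyclic := by
      rw [hPhi]; exact aux_acyclic_mono (deleteEdges_le _) hTree.IsAcyclic
    have hcomps' : ∀ c : (Φ T).ConnectedComponent, c.supp.ncard = n := by
      rw [hPhi]; exact hcomps
    have hcardk : Nat.card (Φ T).ConnectedComponent = k := by
      have := aux_card_comp_mul (Φ T) hcomps'
      rw [hV] at this
      exact Nat.eq_of_mul_eq_mul_right hn this.symm
    exact ⟨hle, hac, hcardk, hcomps'⟩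
  -- surjectivity
  have hsurj : ∀ Hf ∈ B, ∃ T ∈ S, Φ T = Hf := by
    intro Hf hHf
    obtain ⟨hHG, hHac, hHk, hHn⟩ := hHf
    obtain ⟨T, F, hHT, hTG, hTree, hdisjF, hedges, hcF⟩ :=
      aux_exists_tree hG k Hf hHG hHac hHk
    have hFsub : (↑F : Set (Sym2 V)) ⊆ T.edgeSet := by
      rw [hedges]; exact Set.subset_union_right
    have hdel : T.deleteEdges ↑F = Hf := by
      apply edgeSet_injective
      rw [edgeSet_deleteEdges, hedges, Set.union_diff_right]
      exact hdisjF.sdiff_eq_right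
    have hsp : IsSplittable T k n := ⟨F, hFsub, hcF, by rw [hdel]; exact hHn⟩
    refine ⟨T, ⟨hTG, hTree, hsp⟩, ?_⟩
    have hPhi : Φ T = T.deleteEdges ↑hsp.choose := by
      rw [hΦdef]; exact dif_pos hsp
    obtain ⟨hsub', _, hcomps'⟩ := hsp.choose_spec
    have heqF : (↑hsp.choose : Set (Sym2 V)) = ↑F :=
      aux_unique hTree.IsAcyclic hn hsub' hFsub hcomps' (by rw [hdel]; exact hHn)
    rw [hPhi, heqF, hdel]
  have hSfin : S.Finite := Set.toFinite _
  have hBfin : B.Finite := Set.toFinite _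
  constructor
  · -- first inequality
    rw [hnumS, hnumB]
    have himg : B ⊆ Φ '' S := by
      intro Hf hHf
      obtain ⟨T, hT, hPhi⟩ := hsurj Hf hHf
      exact ⟨T, hT, hPhi⟩
    calc B.ncard ≤ (Φ '' S).ncard := Set.ncard_le_ncard himg (hSfin.image _)
      _ ≤ S.ncard := Set.ncard_image_le hSfin
  · -- second inequality
    rw [hnumS, hnumB]
    have hbound : {A : Finset (Sym2 V) | A.card = k - 1}.ncard ≤
        Fintype.card V ^ (2 * (k - 1)) := by
      have hseteq : {A : Finset (Sym2 V) | A.card = k - 1} =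
          ↑(Finset.powersetCard (k - 1) (Finset.univ : Finset (Sym2 V))) := by
        ext A
        simp [Finset.mem_powersetCard_univ]
      rw [hseteq, Set.ncard_coe_finset, Finset.card_powersetCard, Finset.card_univ]
      have hN1 : 1 ≤ Fintype.card V := Fintype.card_pos
      have hsym : Fintype.card (Sym2 V) ≤ Fintype.card V ^ 2 := by
        rw [Sym2.card, Nat.choose_two_right]
        set N := Fintype.card V
        refine Nat.div_le_of_le_mul ?_
        have hNN : N + 1 - 1 = N := by omega
        rw [hNN]
        nlinarith [hN1]
      calc (Fintype.card (Sym2 V)).choose (k - 1)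
          ≤ Fintype.card (Sym2 V) ^ (k - 1) := Nat.choose_le_pow _ _
        _ ≤ (Fintype.card V ^ 2) ^ (k - 1) := Nat.pow_le_pow_left hsym _
        _ = Fintype.card V ^ (2 * (k - 1)) := by rw [← pow_mul]
    have hfiber : ∀ Hf ∈ B, {T | T ∈ S ∧ Φ T = Hf}.ncard ≤
        Fintype.card V ^ (2 * (k - 1)) := by
      intro Hf hHf
      have hHfsub : ∀ T, T ∈ S → Φ T = Hf → Hf.edgeSet ⊆ T.edgeSet := by
        intro T hT hPhi
        obtain ⟨F, hPhiF, hsub, _, _, _⟩ := hmain T hT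
        rw [← hPhi, hPhiF]
        rw [edgeSet_deleteEdges]
        exact Set.diff_subset
      have hmaps : ∀ T ∈ {T | T ∈ S ∧ Φ T = Hf},
          (T.edgeSet \ Hf.edgeSet).toFinset ∈ {A : Finset (Sym2 V) | A.card = k - 1} := by
        rintro T ⟨hTS, hPhiT⟩
        obtain ⟨F, hPhiF, hsub, hcardF, _, hFrec⟩ := hmain T hTS
        rw [hPhiT] at hFrec
        simp only [Set.mem_setOf_eq]
        have hcc : (T.edgeSet \ Hf.edgeSet).toFinset.card = (T.edgeSet \ Hf.edgeSet).ncard :=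
          (Set.ncard_eq_toFinset_card' _).symm
        rw [hcc, ← hFrec, Set.ncard_coe_finset, hcardF]
      have hinj : Set.InjOn (fun T : SimpleGraph V => (T.edgeSet \ Hf.edgeSet).toFinset)
          {T | T ∈ S ∧ Φ T = Hf} := by
        rintro T₁ ⟨hT₁, hP₁⟩ T₂ ⟨hT₂, hP₂⟩ hEq
        simp only at hEq
        have hEq' : T₁.edgeSet \ Hf.edgeSet = T₂.edgeSet \ Hf.edgeSet := by
          rwa [Set.toFinset_inj] at hEq
        apply edgeSet_injective
        have h1 : T₁.edgeSet = Hf.edgeSet ∪ (T₁.edgeSet \ Hf.edgeSet) :=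
          (Set.union_diff_cancel (hHfsub T₁ hT₁ hP₁)).symm
        have h2 : T₂.edgeSet = Hf.edgeSet ∪ (T₂.edgeSet \ Hf.edgeSet) :=
          (Set.union_diff_cancel (hHfsub T₂ hT₂ hP₂)).symm
        rw [h1, h2, hEq']
      calc {T | T ∈ S ∧ Φ T = Hf}.ncard
          ≤ {A : Finset (Sym2 V) | A.card = k - 1}.ncard :=
            Set.ncard_le_ncard_of_injOn _ hmaps hinj (Set.toFinite _)
        _ ≤ Fintype.card V ^ (2 * (k - 1)) := hbound
    -- assemble with Finsets
    have hcardS : S.ncard = hSfin.toFinset.card := Set.ncard_eq_toFinset_card _ hSfin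
    have hcardB : B.ncard = hBfin.toFinset.card := Set.ncard_eq_toFinset_card _ hBfin
    rw [hcardS, hcardB]
    apply Finset.card_le_mul_card_image_of_maps_to (f := Φ)
    · intro T hT
      rw [Set.Finite.mem_toFinset] at hT ⊢
      exact hPhiB T hT
    · intro Hf hHf
      rw [Set.Finite.mem_toFinset] at hHf
      have : ((hSfin.toFinset.filter (fun T => Φ T = Hf)) : Finset (SimpleGraph V)).card =
          {T | T ∈ S ∧ Φ T = Hf}.ncard := by
        rw [← Set.ncard_coe_finset]
        congr 1
        ext T
        simp [Set.Finite.mem_toFinset, S]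
      rw [this]
      exact hfiber Hf hHf
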